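/- For u ≥ 1, the number of compositions of 2u in which no part equals u is 2^(2u-1) - 2^(u-2)·(u+3) + 1. -/

import Mathlib

namespace CAU

def Sset (n : ℕ) : Set (List ℕ) := {l : List ℕ | (∀ x ∈ l, 0 < x) ∧ l.sum = n}
def Uset (u : ℕ) : Set (List ℕ) := {l | (∀ x ∈ l, 0 < x) ∧ u ∈ l ∧ l.sum = 2 * u}
def Pset (u : ℕ) : Set (List ℕ × List ℕ) :=
  {p | (∀ x ∈ p.1, 0 < x) ∧ (∀ x ∈ p.2, 0 < x) ∧ u ∉ p.1 ∧ p.1.sum + p.2.sum = u}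
def Aset (u a : ℕ) : Set (List ℕ) := {l | (∀ x ∈ l, 0 < x) ∧ u ∉ l ∧ l.sum = a}

def compEquiv (n : ℕ) : Composition n ≃ ↥(Sset n) where
  toFun c := ⟨c.blocks, fun _ hx => c.blocks_pos hx, c.blocks_sum⟩
  invFun l := ⟨l.1, fun hi => l.2.1 _ hi, l.2.2⟩
  left_inv _ := rfl
  right_inv _ := rfl

instance instFinS (n : ℕ) : Finite ↥(Sset n) := Finite.of_equiv _ (compEquiv n)

lemma Sset_finite (n : ℕ) : (Sset n).Finite := Set.toFinite _

lemma Sset_ncard (n : ℕ) : (Sset n).ncard = 2 ^ (n - 1) := by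
  rw [← Nat.card_coe_set_eq, Nat.card_congr (compEquiv n).symm,
    Nat.card_eq_fintype_card, composition_card]

lemma eq_nil_of_sum_eq_zero {l : List ℕ} (hp : ∀ x ∈ l, 0 < x) (h : l.sum = 0) : l = [] := by
  cases l with
  | nil => rfl
  | cons a t =>
    have := hp a List.mem_cons_self
    simp [List.sum_cons] at h
    omega

lemma eq_single {u : ℕ} {l : List ℕ} (hp : ∀ x ∈ l, 0 < x) (hs : l.sum = u)
    (hm : u ∈ l) : l = [u] := by
  obtain ⟨s, t, rfl⟩ := List.append_of_mem hm
  have h1 : s.sum = 0 ∧ t.sum = 0 := by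
    simp [List.sum_append, List.sum_cons] at hs; omega
  have hsnil : s = [] := eq_nil_of_sum_eq_zero (fun x hx => hp x (by simp [hx])) h1.1
  have htnil : t = [] := eq_nil_of_sum_eq_zero (fun x hx => hp x (by simp [hx])) h1.2
  simp [hsnil, htnil]

lemma Aset_eq_of_lt {u a : ℕ} (h : a < u) : Aset u a = Sset a := by
  ext l
  constructor
  · rintro ⟨h1, h2, h3⟩; exact ⟨h1, h3⟩
  · rintro ⟨h1, h2⟩
    refine ⟨h1, fun hm => ?_, h2⟩
    have := List.le_sum_of_mem hm
    omega

lemma Aset_eq_self (u : ℕ) : Aset u u = Sset u \ {[u]} := by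
  ext l
  constructor
  · rintro ⟨h1, h2, h3⟩
    exact ⟨⟨h1, h3⟩, by rintro rfl; exact h2 (by simp)⟩
  · rintro ⟨⟨h1, h2⟩, h3⟩
    refine ⟨h1, fun hm => h3 ?_, h2⟩
    exact eq_single h1 h2 hm

lemma Aset_finite (u a : ℕ) : (Aset u a).Finite :=
  (Sset_finite a).subset (fun l hl => ⟨hl.1, hl.2.2⟩)

instance instFinA (u a : ℕ) : Finite ↥(Aset u a) := (Aset_finite u a).to_subtype

lemma Aset_ncard_lt {u a : ℕ} (h : a < u) : (Aset u a).ncard = 2 ^ (a - 1) := by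
  rw [Aset_eq_of_lt h, Sset_ncard]

lemma Aset_ncard_self (u : ℕ) (hu : 1 ≤ u) : (Aset u u).ncard = 2 ^ (u - 1) - 1 := by
  rw [Aset_eq_self u, Set.ncard_diff_singleton_of_mem _, Sset_ncard]
  exact ⟨by intro x hx; simp at hx; omega, by simp⟩

lemma nat_card_sigma {n : ℕ} (f : Fin n → Type*) [∀ i, Finite (f i)] :
    Nat.card (Σ i, f i) = ∑ i, Nat.card (f i) := by
  letI := fun i => Fintype.ofFinite (f i)
  simp [Nat.card_eq_fintype_card]

lemma takeWhile_append_cons {u : ℕ} (l1 l2 : List ℕ) (h : u ∉ l1) :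
    (l1 ++ u :: l2).takeWhile (· != u) = l1 ∧ (l1 ++ u :: l2).dropWhile (· != u) = u :: l2 := by
  induction l1 with
  | nil => simp [List.takeWhile, List.dropWhile]
  | cons a t ih =>
    simp only [List.mem_cons, not_or] at h
    have ha : (a != u) = true := by rw [bne_iff_ne]; exact fun e => h.1 e.symm
    have := ih h.2
    simp [List.takeWhile_cons, List.dropWhile_cons, ha, this.1, this.2]

lemma dropWhile_mem {u : ℕ} {l : List ℕ} (h : u ∈ l) :
    l.dropWhile (· != u) = u :: (l.dropWhile (· != u)).tail := by
  induction l with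
  | nil => cases h
  | cons a t ih =>
    by_cases hau : a = u
    · subst hau; simp [List.dropWhile_cons]
    · have ha : (a != u) = true := by rw [bne_iff_ne]; exact hau
      simp only [List.dropWhile_cons, ha, if_true]
      simp only [List.mem_cons] at h
      exact ih (h.resolve_left (fun e => hau e.symm))

def UPequiv (u : ℕ) (hu : 1 ≤ u) : ↥(Uset u) ≃ ↥(Pset u) where
  toFun l := ⟨(l.1.takeWhile (· != u), (l.1.dropWhile (· != u)).tail), by
    obtain ⟨l, hpos, hmem, hsum⟩ := l
    dsimp only
    have hd := dropWhile_mem hmem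
    have hsplit : l.takeWhile (· != u) ++ l.dropWhile (· != u) = l :=
      List.takeWhile_append_dropWhile (p := (· != u)) (l := l)
    refine ⟨fun x hx => hpos x ?_, fun x hx => hpos x ?_, ?_, ?_⟩
    · exact (List.takeWhile_sublist _).subset hx
    · exact (List.dropWhile_sublist _).subset (List.mem_of_mem_tail hx)
    · intro hmem'
      have := List.mem_takeWhile_imp hmem'
      simp at this
    · dsimp only
      have : (l.takeWhile (· != u)).sum + (u + ((l.dropWhile (· != u)).tail).sum) = 2 * u := by
        rw [← List.sum_cons, ← hd, ← List.sum_append, hsplit, hsum]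
      omega⟩
  invFun p := ⟨p.1.1 ++ u :: p.1.2, by
    obtain ⟨⟨l1, l2⟩, h1, h2, h3, h4⟩ := p
    dsimp only at h1 h2 h3 h4 ⊢
    refine ⟨?_, ?_, ?_⟩
    · intro x hx
      simp only [List.mem_append, List.mem_cons] at hx
      rcases hx with h | h | h
      · exact h1 x h
      · subst h
        omega
      · exact h2 x h
    · simp
    · simp only [List.sum_append, List.sum_cons]
      omega⟩
  left_inv := by
    rintro ⟨l, hpos, hmem, hsum⟩
    apply Subtype.ext
    dsimp only
    rw [← dropWhile_mem hmem, List.takeWhile_append_dropWhile]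
  right_inv := by
    rintro ⟨⟨l1, l2⟩, h1, h2, h3, h4⟩
    have h := takeWhile_append_cons l1 l2 h3
    apply Subtype.ext
    dsimp only
    rw [h.1, h.2, List.tail_cons]

def PSigmaEquiv (u : ℕ) : ↥(Pset u) ≃ Σ a : Fin (u + 1), ↥(Aset u a) × ↥(Sset (u - a)) where
  toFun p := ⟨⟨p.1.1.sum, by
      obtain ⟨⟨l1, l2⟩, h1, h2, h3, h4⟩ := p
      dsimp only at h4 ⊢
      omega⟩,
    ⟨p.1.1, p.2.1, p.2.2.2.1, rfl⟩,
    ⟨p.1.2, p.2.2.1, by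
      obtain ⟨⟨l1, l2⟩, h1, h2, h3, h4⟩ := p
      dsimp only at h4 ⊢
      omega⟩⟩
  invFun x := ⟨(x.2.1.1, x.2.2.1), x.2.1.2.1, x.2.2.2.1, x.2.1.2.2.1, by
      obtain ⟨⟨a, ha⟩, ⟨l1, p1, p2, p3⟩, ⟨l2, q1, q2⟩⟩ := x
      dsimp only at p3 q2 ⊢
      omega⟩
  left_inv p := rfl
  right_inv := by
    rintro ⟨⟨a, ha⟩, ⟨l1, p1, p2, p3⟩, ⟨l2, q1, q2⟩⟩
    dsimp only at p3 ⊢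
    subst p3
    rfl

lemma card_U (u : ℕ) (hu : 1 ≤ u) :
    (Uset u).ncard = (∑ a ∈ Finset.range (u + 1), 2 ^ (a - 1) * 2 ^ (u - a - 1)) - 1 := by
  rw [← Nat.card_coe_set_eq,
    Nat.card_congr ((UPequiv u hu).trans (PSigmaEquiv u)),
    nat_card_sigma]
  have hc : ∀ i : Fin (u + 1),
      Nat.card (↥(Aset u i) × ↥(Sset (u - i))) = (Aset u i).ncard * (Sset (u - i)).ncard := by
    intro i
    rw [Nat.card_prod, Nat.card_coe_set_eq, Nat.card_coe_set_eq]
  rw [Finset.sum_congr rfl (fun i _ => hc i),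
    Fin.sum_univ_eq_sum_range (fun a => (Aset u a).ncard * (Sset (u - a)).ncard),
    Finset.sum_range_succ, Aset_ncard_self u hu, Sset_ncard]
  have hcong : ∀ a ∈ Finset.range u,
      (Aset u a).ncard * (Sset (u - a)).ncard = 2 ^ (a - 1) * 2 ^ (u - a - 1) := by
    intro a ha
    rw [Finset.mem_range] at ha
    rw [Aset_ncard_lt ha, Sset_ncard]
  rw [Finset.sum_congr rfl hcong, Finset.sum_range_succ]
  have h0 : u - u - 1 = 0 := by omega
  rw [h0, pow_zero]
  have h1 : 1 ≤ 2 ^ (u - 1) := Nat.one_le_two_pow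
  generalize (∑ a ∈ Finset.range u, 2 ^ (a - 1) * 2 ^ (u - a - 1)) = X
  omega

lemma ssum_eq (v : ℕ) :
    ∑ a ∈ Finset.range (v + 2), 2 ^ (a - 1) * 2 ^ (v + 1 - a - 1) =
      2 ^ (v + 1) + v * 2 ^ (v - 1) := by
  rw [Finset.sum_range_succ', Finset.sum_range_succ]
  have h : ∀ k ∈ Finset.range v, 2 ^ (k + 1 - 1) * 2 ^ (v + 1 - (k + 1) - 1) = 2 ^ (v - 1) := by
    intro k hk
    rw [Finset.mem_range] at hk
    rw [Nat.add_sub_cancel, ← pow_add]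
    congr 1
    omega
  rw [Finset.sum_congr rfl h, Finset.sum_const, smul_eq_mul]
  have e1 : v + 1 - (v + 1) - 1 = 0 := by omega
  have e2 : v + 1 - 0 - 1 = v := by omega
  rw [Nat.add_sub_cancel, e1, e2, pow_zero, Finset.card_range, pow_succ]
  ring

end CAU

/-- For u ≥ 1, the number of compositions of 2u in which no part equals u is
2^(2u-1) - 2^(u-2)(u+3) + 1 (with rational arithmetic, 2^(u-2) meaning the
rational power when u = 1). -/
theorem card_compositions_avoiding_u (u : ℕ) (hu : 1 ≤ u) :
    (Set.ncard {l : List ℕ | (∀ x ∈ l, 0 < x) ∧ (∀ x ∈ l, x ≠ u) ∧ l.sum = 2 * u} : ℚ)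
      = 2 ^ (2 * u - 1) - 2 ^ ((u : ℤ) - 2) * ((u : ℚ) + 3) + 1 := by
  set T : Set (List ℕ) :=
    {l : List ℕ | (∀ x ∈ l, 0 < x) ∧ (∀ x ∈ l, x ≠ u) ∧ l.sum = 2 * u} with hT
  have hTU : CAU.Sset (2 * u) = T ∪ CAU.Uset u := by
    ext l
    constructor
    · rintro ⟨h1, h2⟩
      by_cases hm : u ∈ l
      · exact Or.inr ⟨h1, hm, h2⟩
      · exact Or.inl ⟨h1, fun x hx e => hm (e ▸ hx), h2⟩
    · rintro (⟨h1, h2, h3⟩ | ⟨h1, h2, h3⟩)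
      · exact ⟨h1, h3⟩
      · exact ⟨h1, h3⟩
  have hdisj : Disjoint T (CAU.Uset u) := by
    rw [Set.disjoint_left]
    rintro l ⟨h1, h2, h3⟩ ⟨g1, g2, g3⟩
    exact h2 u g2 rfl
  have hTfin : T.Finite :=
    (CAU.Sset_finite (2 * u)).subset (by rintro l ⟨h1, h2, h3⟩; exact ⟨h1, h3⟩)
  have hUfin : (CAU.Uset u).Finite :=
    (CAU.Sset_finite (2 * u)).subset (by rintro l ⟨h1, h2, h3⟩; exact ⟨h1, h3⟩)
  have hcard : T.ncard + (CAU.Uset u).ncard = 2 ^ (2 * u - 1) := by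
    rw [← Set.ncard_union_eq hdisj hTfin hUfin, ← hTU, CAU.Sset_ncard]
  obtain ⟨v, rfl⟩ : ∃ v, u = v + 1 := ⟨u - 1, by omega⟩
  have hU : (CAU.Uset (v + 1)).ncard = 2 ^ (v + 1) + v * 2 ^ (v - 1) - 1 := by
    rw [CAU.card_U (v + 1) hu]
    congr 1
    exact CAU.ssum_eq v
  have hone : (1 : ℕ) ≤ 2 ^ (v + 1) + v * 2 ^ (v - 1) :=
    le_trans Nat.one_le_two_pow (Nat.le_add_right _ _)
  have hQ : (T.ncard : ℚ) =
      2 ^ (2 * (v + 1) - 1) - (2 ^ (v + 1) + (v : ℚ) * 2 ^ (v - 1)) + 1 := by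
    rw [hU] at hcard
    have h3 := congrArg (fun n : ℕ => (n : ℚ)) hcard
    push_cast [Nat.cast_sub hone] at h3
    linarith
  have hval : (2 : ℚ) ^ (((v + 1 : ℕ) : ℤ) - 2) * (((v + 1 : ℕ) : ℚ) + 3)
      = 2 ^ (v + 1) + (v : ℚ) * 2 ^ (v - 1) := by
    rcases Nat.eq_zero_or_pos v with rfl | hv
    · norm_num
    · obtain ⟨w, rfl⟩ : ∃ w, v = w + 1 := ⟨v - 1, by omega⟩
      have he : (((w + 1 + 1 : ℕ) : ℤ) - 2) = ((w : ℕ) : ℤ) := by push_cast; ring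
      rw [he, zpow_natCast]
      push_cast
      rw [pow_succ, pow_succ]
      ring
  rw [hQ, ← hval]
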